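/- Let a, b ≥ 2 be integers and let A = 1 + M^a·(M+1)^b in F_2[x]. Then: (i) if a + b = 2^r for some r ≥ 1, then ℓ_A = b + 1; (ii) if a + b = 2^r·u with u ≥ 3 odd and r ≥ 1, then ℓ_A = b + 2^r·(2^w - u) + 1, where w is the least positive integer such that u - 1 < 2^w; (iii) if a + b = 2^t + 1 for some t ≥ 1, then ℓ_A = a + 2b - 1; (iv) if a + b = 2v + 1 where v is not a power of 2, then ℓ_A = b + 2^r - 2v, where r is the least positive integer such that 2v < 2^r. -/
import Mathlib


open Polynomial Finset

/-- The polynomial `M = x^2 + x + 1` over `F_2`. -/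
noncomputable def M : Polynomial (ZMod 2) := X ^ 2 + X + 1

/-- The odd part of a binary polynomial: `P` divided by `x^{val_x(P)} (x+1)^{val_{x+1}(P)}`. -/
noncomputable def oddPart (P : Polynomial (ZMod 2)) : Polynomial (ZMod 2) :=
  P / (X ^ P.rootMultiplicity 0 * (X + 1) ^ P.rootMultiplicity 1)

/-- The Collatz sequence of a binary polynomial `A`:
`A_0 = A`, `A_{2k+1} = oddPart A_{2k}`, `A_{2k+2} = 1 + M * A_{2k+1}`. -/
noncomputable def collatz (A : Polynomial (ZMod 2)) : ℕ → Polynomial (ZMod 2)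
  | 0 => A
  | n + 1 => if n % 2 = 0 then oddPart (collatz A n) else 1 + M * collatz A n

/-- `a_k`: the multiplicity of `x` in `A_k`. -/
noncomputable def aSeq (A : Polynomial (ZMod 2)) (k : ℕ) : ℕ :=
  (collatz A k).rootMultiplicity 0

/-- `b_k`: the multiplicity of `x + 1` in `A_k`. -/
noncomputable def bSeq (A : Polynomial (ZMod 2)) (k : ℕ) : ℕ :=
  (collatz A k).rootMultiplicity 1

/-- The length `ℓ_A = m + 1`, where `m` is the least nonnegative integer
with `A_{2m+1} = 1`. -/
noncomputable def collatzLength (A : Polynomial (ZMod 2)) : ℕ :=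
  sInf {m : ℕ | collatz A (2 * m + 1) = 1} + 1

abbrev R2 := Polynomial (ZMod 2)

noncomputable def N : R2 := M + 1

noncomputable def S (u : ℕ) : R2 := ∑ i ∈ range u, M ^ i

lemma N_eq : N = X * (X + 1) := by
  simp only [N, M]
  ring_nf
  rw [show (2:R2) = 0 from CharTwo.two_eq_zero]
  ring
lemma M_eval0 : M.eval 0 = 1 := by simp [M]
lemma M_eval1 : M.eval 1 = 1 := by
  simp only [M, eval_add, eval_pow, eval_X, eval_one, one_pow]
  decide
lemma N_eval0 : N.eval 0 = 0 := by
  simp [N, M]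
  decide
lemma N_eval1 : N.eval 1 = 0 := by
  simp [N, M]
  decide
lemma M_ne_zero : M ≠ 0 := fun h => by simpa [h] using M_eval0
lemma X1_ne_zero : (X + 1 : R2) ≠ 0 := fun h => by
  have : (X + 1 : R2).eval 0 = 1 := by simp
  simpa [h] using this
lemma N_ne_zero : N ≠ 0 := by
  rw [N_eq]; exact mul_ne_zero X_ne_zero X1_ne_zero

lemma S_succ (u : ℕ) : S (u + 1) = 1 + M * S u := by
  rw [S, S, geom_sum_succ]; ring

lemma N_mul_S (u : ℕ) : N * S u = 1 + M ^ u := by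
  have := geom_sum_mul M u
  rw [CharTwo.sub_eq_add, CharTwo.sub_eq_add] at this
  rw [S, N]; rw [mul_comm]; rw [this]; ring

lemma S_eval0 {u : ℕ} (hu : Odd u) : (S u).eval 0 = 1 := by
  have : (S u).eval 0 = ∑ i ∈ range u, (M.eval 0) ^ i := by
    simp [S, eval_finset_sum]
  rw [this, M_eval0]
  simp only [one_pow, sum_const, card_range, smul_eq_mul, mul_one, nsmul_eq_mul]
  rw [← ZMod.natCast_mod u 2, Nat.odd_iff.mp hu]
  norm_num
lemma S_eval1 {u : ℕ} (hu : Odd u) : (S u).eval 1 = 1 := by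
  have : (S u).eval 1 = ∑ i ∈ range u, (M.eval 1) ^ i := by
    simp [S, eval_finset_sum]
  rw [this, M_eval1]
  simp only [one_pow, sum_const, card_range, smul_eq_mul, mul_one, nsmul_eq_mul]
  rw [← ZMod.natCast_mod u 2, Nat.odd_iff.mp hu]
  norm_num

lemma S_ne_zero {u : ℕ} (hu : Odd u) : S u ≠ 0 := fun h => by
  have := S_eval0 hu; rw [h] at this; simp at this

lemma S_two_mul (m : ℕ) : S (2 * m) = N * S m ^ 2 := by
  have h2 : N * S (2 * m) = N * (N * S m ^ 2) := by
    rw [N_mul_S]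
    have : (1 : R2) + M ^ (2 * m) = (1 + M ^ m) ^ 2 := by
      rw [add_pow_char (p := 2), one_pow, mul_comm 2 m, pow_mul]
    rw [this, ← N_mul_S, mul_pow]
    ring
  exact mul_left_cancel₀ N_ne_zero h2

lemma S_pow2_mul (e w : ℕ) : S (2 ^ e * w) = N ^ (2 ^ e - 1) * S w ^ 2 ^ e := by
  induction e with
  | zero => simp
  | succ e ih =>
    have : 2 ^ (e + 1) * w = 2 * (2 ^ e * w) := by ring
    rw [this, S_two_mul, ih]
    rw [mul_pow, ← pow_mul, ← pow_mul, ← mul_assoc, ← pow_succ']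
    have h1 : 1 ≤ 2 ^ e := Nat.one_le_two_pow
    have e1 : (2 ^ e - 1) * 2 + 1 = 2 ^ (e + 1) - 1 := by
      rw [pow_succ]; omega
    have e2 : 2 ^ e * 2 = 2 ^ (e + 1) := by rw [pow_succ]
    rw [e1, e2]

lemma one_add_ne_one {P : R2} (h : P ≠ 0) : (1 : R2) + P ≠ 1 := by
  intro hc
  exact h (by simpa using hc.symm)

/-- Key oddPart computation. -/
lemma oddPart_eq (i j : ℕ) (G : R2) (h0 : G.eval 0 ≠ 0) (h1 : G.eval 1 ≠ 0) :
    oddPart (X ^ i * (X + 1) ^ j * G) = G := by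
  have hG : G ≠ 0 := fun h => by simp [h] at h0
  have hX1 : (X + 1 : R2) = X - C 1 := by
    rw [map_one, sub_eq_add_neg, CharTwo.neg_eq]
  have hX0 : (X : R2) = X - C 0 := by simp
  have hne : (X : R2) ^ i * (X + 1) ^ j * G ≠ 0 :=
    mul_ne_zero (mul_ne_zero (pow_ne_zero _ X_ne_zero) (pow_ne_zero _ X1_ne_zero)) hG
  have hne2 : (X : R2) ^ i * (X + 1) ^ j ≠ 0 :=
    mul_ne_zero (pow_ne_zero _ X_ne_zero) (pow_ne_zero _ X1_ne_zero)
  have r00 : rootMultiplicity 0 ((X : R2) ^ i) = i := by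
    nth_rewrite 1 [hX0]; exact rootMultiplicity_X_sub_C_pow 0 i
  have r11 : rootMultiplicity 1 (((X : R2) + 1) ^ j) = j := by
    nth_rewrite 1 [hX1]; exact rootMultiplicity_X_sub_C_pow 1 j
  have r01 : rootMultiplicity 0 (((X : R2) + 1) ^ j) = 0 := by
    apply rootMultiplicity_eq_zero
    simp [IsRoot]
  have r10 : rootMultiplicity 1 ((X : R2) ^ i) = 0 := by
    apply rootMultiplicity_eq_zero
    simp [IsRoot]
  have r0G : rootMultiplicity 0 G = 0 := rootMultiplicity_eq_zero h0
  have r1G : rootMultiplicity 1 G = 0 := rootMultiplicity_eq_zero h1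
  have m0 : rootMultiplicity 0 ((X : R2) ^ i * (X + 1) ^ j * G) = i := by
    rw [rootMultiplicity_mul hne, rootMultiplicity_mul hne2, r00, r01, r0G]; omega
  have m1 : rootMultiplicity 1 ((X : R2) ^ i * (X + 1) ^ j * G) = j := by
    rw [rootMultiplicity_mul hne, rootMultiplicity_mul hne2, r10, r11, r1G]; omega
  rw [oddPart, m0, m1]
  exact mul_div_cancel_left₀ G hne2

lemma collatz_one (A : R2) : collatz A 1 = oddPart A := by
  simp [collatz]

lemma collatz_step (A : R2) (k : ℕ) :
    collatz A (2 * (k + 1) + 1) = oddPart (1 + M * collatz A (2 * k + 1)) := by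
  have h1 : 2 * (k + 1) + 1 = (2 * k + 2) + 1 := by ring
  have h2 : (2 * k + 2) = (2 * k + 1) + 1 := by ring
  rw [h1, collatz, if_pos (by omega), h2, collatz, if_neg (by omega)]

/-- One ramp step. -/
lemma step_ramp (A : R2) (k c d : ℕ) (F : R2) (hF0 : F.eval 0 = 1) (hF1 : F.eval 1 = 1)
    (hd : 2 ≤ d) (h : collatz A (2 * k + 1) = 1 + M ^ c * N ^ d * F) :
    collatz A (2 * (k + 1) + 1) = 1 + M ^ (c + 1) * N ^ (d - 1) * F := by
  rw [collatz_step, h]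
  have key : 1 + M * (1 + M ^ c * N ^ d * F)
      = X ^ 1 * (X + 1) ^ 1 * (1 + M ^ (c + 1) * N ^ (d - 1) * F) := by
    have hNd : N ^ d = N * N ^ (d - 1) := by
      nth_rewrite 1 [show d = 1 + (d - 1) by omega]
      rw [pow_add, pow_one]
    have h1M : (1 : R2) + M = N := by rw [N]; ring
    calc 1 + M * (1 + M ^ c * N ^ d * F)
        = (1 + M) + M ^ (c + 1) * N ^ d * F := by ring
      _ = N * (1 + M ^ (c + 1) * N ^ (d - 1) * F) := by
          rw [h1M, hNd]; ring
      _ = X ^ 1 * (X + 1) ^ 1 * (1 + M ^ (c + 1) * N ^ (d - 1) * F) := by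
          rw [pow_one, pow_one, ← N_eq]
  rw [key]
  apply oddPart_eq
  · have : (1 + M ^ (c + 1) * N ^ (d - 1) * F).eval 0
        = 1 + (M.eval 0) ^ (c+1) * (N.eval 0) ^ (d-1) * F.eval 0 := by simp
    rw [this, M_eval0, N_eval0, hF0, zero_pow (by omega)]
    norm_num
  · have : (1 + M ^ (c + 1) * N ^ (d - 1) * F).eval 1
        = 1 + (M.eval 1) ^ (c+1) * (N.eval 1) ^ (d-1) * F.eval 1 := by simp
    rw [this, M_eval1, N_eval1, hF1, zero_pow (by omega)]
    norm_num

/-- Iterated ramp. -/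
lemma ramp (A : R2) (k c d : ℕ) (F : R2) (hF0 : F.eval 0 = 1) (hF1 : F.eval 1 = 1)
    (h : collatz A (2 * k + 1) = 1 + M ^ c * N ^ d * F) :
    ∀ i, i < d → collatz A (2 * (k + i) + 1) = 1 + M ^ (c + i) * N ^ (d - i) * F := by
  intro i
  induction i with
  | zero => intro _; simpa using h
  | succ i ih =>
    intro hlt
    have hstate := ih (by omega)
    have := step_ramp A (k + i) (c + i) (d - i) F hF0 hF1 (by omega) hstate
    rw [show k + (i+1) = (k + i) + 1 by ring, this,
      show c + i + 1 = c + (i+1) by ring, show d - i - 1 = d - (i+1) by omega]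

/-- The jump step at the end of a ramp. -/
lemma jump (A : R2) (k c j : ℕ) (F G : R2)
    (h : collatz A (2 * k + 1) = 1 + M ^ c * N * F)
    (hfac : 1 + M ^ (c + 1) * F = N ^ j * G)
    (hG0 : G.eval 0 ≠ 0) (hG1 : G.eval 1 ≠ 0) :
    collatz A (2 * (k + 1) + 1) = G := by
  rw [collatz_step, h]
  have h1M : (1 : R2) + M = N := by rw [N]; ring
  have key : 1 + M * (1 + M ^ c * N * F) = X ^ (j+1) * (X + 1) ^ (j+1) * G := by
    calc 1 + M * (1 + M ^ c * N * F)
        = (1 + M) + M ^ (c + 1) * N * F := by ring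
      _ = N * (1 + M ^ (c + 1) * F) := by rw [h1M]; ring
      _ = N * (N ^ j * G) := by rw [hfac]
      _ = N ^ (j + 1) * G := by ring
      _ = X ^ (j+1) * (X + 1) ^ (j+1) * G := by rw [N_eq, mul_pow]
  rw [key]
  exact oddPart_eq _ _ G hG0 hG1

lemma S_decomp {u e w : ℕ} (hu1 : 1 ≤ u) (hu : u - 1 = 2 ^ e * w) (s : ℕ) :
    (S u) ^ 2 ^ s = 1 + M ^ 2 ^ s * N ^ ((2 ^ e - 1) * 2 ^ s) * (S w) ^ (2 ^ e * 2 ^ s) := by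
  have h1 : S u = 1 + M * (N ^ (2 ^ e - 1) * S w ^ 2 ^ e) := by
    have : u = (u - 1) + 1 := by omega
    rw [this, S_succ, hu, S_pow2_mul]
  rw [h1, add_pow_char_pow (p := 2), one_pow]
  congr 1
  rw [mul_pow, mul_pow, ← pow_mul, ← pow_mul]
  ring

lemma jump_fac {w e' w'' : ℕ} (hw : w + 1 = 2 ^ e' * w'') (t : ℕ) :
    1 + M ^ 2 ^ t * (S w) ^ 2 ^ t
      = N ^ ((2 ^ e' - 1) * 2 ^ t) * (S w'') ^ (2 ^ e' * 2 ^ t) := by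
  have h1 : (1 : R2) + M ^ 2 ^ t * (S w) ^ 2 ^ t = (1 + M * S w) ^ 2 ^ t := by
    rw [add_pow_char_pow (p := 2), one_pow, mul_pow]
  rw [h1, ← S_succ, show w + 1 = 2 ^ e' * w'' from hw, S_pow2_mul, mul_pow,
    ← pow_mul, ← pow_mul]

lemma window_unique {m W V : ℕ} (h1 : 2 ^ (W - 1) ≤ m) (h2 : m < 2 ^ W)
    (h3 : 2 ^ (V - 1) ≤ m) (h4 : m < 2 ^ V) : W = V := by
  by_contra h
  rcases Nat.lt_or_ge W V with hlt | hge
  · have : (2:ℕ) ^ W ≤ 2 ^ (V - 1) := Nat.pow_le_pow_right (by norm_num) (by omega)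
    omega
  · have : (2:ℕ) ^ V ≤ 2 ^ (W - 1) := Nat.pow_le_pow_right (by norm_num) (by omega)
    omega

lemma exists_window {m : ℕ} (hm : 1 ≤ m) : ∃ V, 1 ≤ V ∧ 2 ^ (V - 1) ≤ m ∧ m < 2 ^ V := by
  refine ⟨Nat.log 2 m + 1, by omega, ?_, Nat.lt_pow_succ_log_self (by norm_num) m⟩
  simpa using Nat.pow_log_le_self 2 (by omega)

lemma state_ne_one {α β : ℕ} {F : R2} (hF : F ≠ 0) :
    (1 : R2) + M ^ α * N ^ β * F ≠ 1 :=
  one_add_ne_one (mul_ne_zero (mul_ne_zero (pow_ne_zero _ M_ne_zero) (pow_ne_zero _ N_ne_zero)) hF)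

/-- The core tail lemma: trajectory length from `(S u)^(2^s)`. -/
lemma core : ∀ u : ℕ, Odd u → 3 ≤ u → ∀ W : ℕ, 2 ^ (W - 1) ≤ u - 1 → u - 1 < 2 ^ W →
    ∀ s : ℕ, ∀ A : R2, ∀ k : ℕ, collatz A (2 * k + 1) = (S u) ^ 2 ^ s →
    (∀ i : ℕ, i < 2 ^ s * (2 ^ W - u) → collatz A (2 * (k + i) + 1) ≠ 1) ∧
    collatz A (2 * (k + 2 ^ s * (2 ^ W - u)) + 1) = 1 := by
  intro u
  induction u using Nat.strong_induction_on with
  | _ u IH =>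
  intro hodd hu3 W hW1 hW2 s A k hstate
  have hoddm := Nat.odd_iff.mp hodd
  obtain ⟨e, w, hwodd', hew⟩ := Nat.exists_eq_pow_mul_and_not_dvd
    (n := u - 1) (by omega) 2 (by norm_num)
  have hwodd : Odd w := Nat.odd_iff.mpr (by omega)
  have hwoddm := Nat.odd_iff.mp hwodd
  have he1 : 1 ≤ e := by
    rcases Nat.eq_zero_or_pos e with h | h
    · exfalso; rw [h, pow_zero, one_mul] at hew; omega
    · omega
  obtain ⟨e', w'', hw2', hew2⟩ := Nat.exists_eq_pow_mul_and_not_dvd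
    (n := w + 1) (by omega) 2 (by norm_num)
  have hw2odd : Odd w'' := Nat.odd_iff.mpr (by omega)
  have hw2oddm := Nat.odd_iff.mp hw2odd
  have he'1 : 1 ≤ e' := by
    rcases Nat.eq_zero_or_pos e' with h | h
    · exfalso; rw [h, pow_zero, one_mul] at hew2; omega
    · omega
  -- basic numeric facts
  have hp1 : 1 ≤ 2 ^ e := Nat.one_le_two_pow
  have hp2 : 2 ≤ 2 ^ e := by
    calc 2 = 2 ^ 1 := rfl
    _ ≤ 2 ^ e := Nat.pow_le_pow_right (by norm_num) he1
  have hq1 : 1 ≤ 2 ^ s := Nat.one_le_two_pow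
  have hp2' : 2 ≤ 2 ^ e' := by
    calc 2 = 2 ^ 1 := rfl
    _ ≤ 2 ^ e' := Nat.pow_le_pow_right (by norm_num) he'1
  set D := (2 ^ e - 1) * 2 ^ s with hD
  have hD1 : 1 ≤ D := Nat.mul_pos (by omega) (by omega)
  -- the ramp
  set F : R2 := (S w) ^ (2 ^ e * 2 ^ s) with hF
  have hF0 : F.eval 0 = 1 := by rw [hF, eval_pow, S_eval0 hwodd, one_pow]
  have hF1 : F.eval 1 = 1 := by rw [hF, eval_pow, S_eval1 hwodd, one_pow]
  have hFne : F ≠ 0 := pow_ne_zero _ (S_ne_zero hwodd)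
  have hstate' : collatz A (2 * k + 1) = 1 + M ^ 2 ^ s * N ^ D * F := by
    rw [hstate, S_decomp (by omega : 1 ≤ u) hew s]
  have hramp := ramp A k (2 ^ s) D F hF0 hF1 hstate'
  -- the jump
  have hlast := hramp (D - 1) (by omega)
  rw [show D - (D - 1) = 1 by omega, pow_one] at hlast
  have hc1 : 2 ^ s + (D - 1) + 1 = 2 ^ (e + s) := by
    have h1 : D = 2 ^ e * 2 ^ s - 1 * 2 ^ s := by rw [hD, Nat.sub_mul]
    have h2 : 2 ^ s ≤ 2 ^ e * 2 ^ s := Nat.le_mul_of_pos_left _ (by omega)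
    have h3 : (2:ℕ) ^ (e + s) = 2 ^ e * 2 ^ s := pow_add 2 e s
    omega
  have hGfac : 1 + M ^ (2 ^ s + (D - 1) + 1) * F
      = N ^ ((2 ^ e' - 1) * 2 ^ (e + s)) * (S w'') ^ (2 ^ e' * 2 ^ (e + s)) := by
    rw [hc1, hF, show (2:ℕ) ^ e * 2 ^ s = 2 ^ (e + s) from (pow_add 2 e s).symm]
    exact jump_fac hew2 (e + s)
  have hjump : collatz A (2 * (k + D) + 1) = (S w'') ^ (2 ^ e' * 2 ^ (e + s)) := by
    have := jump A (k + (D - 1)) (2 ^ s + (D - 1)) ((2 ^ e' - 1) * 2 ^ (e + s)) F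
      ((S w'') ^ (2 ^ e' * 2 ^ (e + s))) hlast hGfac
      (by rw [eval_pow, S_eval0 hw2odd, one_pow]; norm_num)
      (by rw [eval_pow, S_eval1 hw2odd, one_pow]; norm_num)
    rw [show k + D = k + (D - 1) + 1 by omega]
    exact this
  -- ramp states are nonzero
  have hne_ramp : ∀ i, i < D → collatz A (2 * (k + i) + 1) ≠ 1 := by
    intro i hi
    rw [hramp i hi]
    exact state_ne_one hFne
  by_cases hw''1 : w'' = 1
  · -- terminal case
    have hwval : w = 2 ^ e' - 1 := by
      rw [hw''1, mul_one] at hew2; omega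
    have huval : u - 1 = 2 ^ (e + e') - 2 ^ e := by
      rw [hew, hwval, pow_add, Nat.mul_sub, mul_one]
    have hee'1 : (2:ℕ) ^ e ≤ 2 ^ (e + e' - 1) := Nat.pow_le_pow_right (by norm_num) (by omega)
    have hee'2 : (2:ℕ) ^ (e + e' - 1) + 2 ^ (e + e' - 1) = 2 ^ (e + e') := by
      rw [← two_mul, ← pow_succ']
      congr 1
      omega
    have hWee' : W = e + e' := by
      apply window_unique hW1 hW2 <;> omega
    have hTD : 2 ^ s * (2 ^ W - u) = D := by
      have h4 : 2 ^ W - u = 2 ^ e - 1 := by rw [hWee']; omega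
      rw [h4, hD, mul_comm]
    constructor
    · intro i hi
      rw [hTD] at hi
      exact hne_ramp i hi
    · rw [hTD, hjump, hw''1]
      simp [S]
  · -- recursive case
    have hw''3 : 3 ≤ w'' := by
      rcases hw2odd with ⟨t, ht⟩
      omega
    have hw''lt : w'' < u := by
      have h1 : 2 * w'' ≤ 2 ^ e' * w'' := Nat.mul_le_mul_right _ hp2'
      have h2 : 2 * w ≤ 2 ^ e * w := Nat.mul_le_mul_right _ hp2
      omega
    obtain ⟨W'', hW''1, hW''lb, hW''ub⟩ := exists_window (m := w'' - 1) (by omega)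
    have hIH := IH w'' hw''lt hw2odd hw''3 W'' hW''lb hW''ub (e' + (e + s)) A (k + D)
      (by rw [hjump]; congr 1; simp [pow_add])
    have hrw : (2:ℕ) ^ W'' = 2 ^ (W'' - 1) * 2 := by
      rw [← pow_succ]; congr 1; omega
    have hw''ub' : w'' ≤ 2 ^ W'' - 1 := by omega
    have hWeq : W = e + e' + W'' := by
      apply window_unique hW1 hW2
      · -- lower bound
        have key : 2 ^ e * (2 ^ e' * (w'' - 1)) ≤ u - 1 := by
          rw [hew]
          apply Nat.mul_le_mul_left
          have : 2 ^ e' * (w'' - 1) = 2 ^ e' * w'' - 2 ^ e' * 1 := Nat.mul_sub _ _ _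
          have h2 : 1 ≤ 2 ^ e' * w'' := Nat.one_le_iff_ne_zero.mpr (by positivity)
          omega
        have key2 : (2:ℕ) ^ (e + e' + W'' - 1) ≤ 2 ^ e * (2 ^ e' * (w'' - 1)) := by
          calc (2:ℕ) ^ (e + e' + W'' - 1) = 2 ^ e * (2 ^ e' * 2 ^ (W'' - 1)) := by
                rw [← pow_add, ← pow_add]
                congr 1
                omega
          _ ≤ 2 ^ e * (2 ^ e' * (w'' - 1)) :=
                Nat.mul_le_mul_left _ (Nat.mul_le_mul_left _ hW''lb)
        omega
      · -- upper bound
        rw [hew]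
        calc 2 ^ e * w < 2 ^ e * (w + 1) :=
              (Nat.mul_lt_mul_left (by omega)).mpr (by omega)
        _ = 2 ^ e * (2 ^ e' * w'') := by rw [hew2]
        _ ≤ 2 ^ e * (2 ^ e' * (2 ^ W'' - 1)) :=
              Nat.mul_le_mul_left _ (Nat.mul_le_mul_left _ hw''ub')
        _ < 2 ^ (e + e' + W'') := by
              rw [pow_add, pow_add, mul_assoc]
              exact (Nat.mul_lt_mul_left (by omega)).mpr
                ((Nat.mul_lt_mul_left (by omega)).mpr (by omega))
    -- total-length arithmetic
    have hxc : w'' ≤ 2 ^ W'' := by omega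
    have hmulsub : 2 ^ e * 2 ^ e' * (2 ^ W'' - w'') = 2 ^ e * 2 ^ e' * 2 ^ W'' - 2 ^ e * 2 ^ e' * w''
      := Nat.mul_sub _ _ _
    have hmono : 2 ^ e * 2 ^ e' * w'' ≤ 2 ^ e * 2 ^ e' * 2 ^ W'' := Nat.mul_le_mul_left _ hxc
    have hu_eq : u = 2 ^ e * 2 ^ e' * w'' - 2 ^ e + 1 := by
      have h9 : 2 ^ e * w = 2 ^ e * (w + 1) - 2 ^ e * 1 := by
        rw [← Nat.mul_sub]
        simp
      rw [hew2, ← mul_assoc] at h9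
      have h10 : 2 ^ e ≤ 2 ^ e * 2 ^ e' * w'' := by
        have : 1 ≤ 2 ^ e' * w'' := Nat.one_le_iff_ne_zero.mpr (by positivity)
        calc 2 ^ e = 2 ^ e * 1 := by ring
        _ ≤ 2 ^ e * (2 ^ e' * w'') := Nat.mul_le_mul_left _ this
        _ = 2 ^ e * 2 ^ e' * w'' := by ring
      omega
    have h10 : 2 ^ e ≤ 2 ^ e * 2 ^ e' * w'' := by
      have : 1 ≤ 2 ^ e' * w'' := Nat.one_le_iff_ne_zero.mpr (by positivity)
      calc 2 ^ e = 2 ^ e * 1 := by ring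
      _ ≤ 2 ^ e * (2 ^ e' * w'') := Nat.mul_le_mul_left _ this
      _ = 2 ^ e * 2 ^ e' * w'' := by ring
    have hPW : (2:ℕ) ^ W = 2 ^ e * 2 ^ e' * 2 ^ W'' := by
      rw [hWeq, pow_add, pow_add]
    have hkey : 2 ^ W - u = 2 ^ e * 2 ^ e' * (2 ^ W'' - w'') + (2 ^ e - 1) := by
      omega
    have hQs : (2:ℕ) ^ (e' + (e + s)) = 2 ^ e * 2 ^ e' * 2 ^ s := by
      rw [pow_add, pow_add]
      ring
    have harith : 2 ^ s * (2 ^ W - u) = D + 2 ^ (e' + (e + s)) * (2 ^ W'' - w'') := by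
      rw [hkey, hQs, hD]
      ring
    constructor
    · intro i hi
      by_cases hiD : i < D
      · exact hne_ramp i hiD
      · have hi' : i - D < 2 ^ (e' + (e + s)) * (2 ^ W'' - w'') := by omega
        have := hIH.1 (i - D) hi'
        rw [show k + D + (i - D) = k + i by omega] at this
        exact this
    · rw [harith, ← add_assoc]
      exact hIH.2

lemma phaseA (a b : ℕ) (ha : 2 ≤ a) (hb : 2 ≤ b) (A : R2) (hA : A = 1 + M ^ a * (M + 1) ^ b)
    (g v : ℕ) (hv : Odd v) (hn : a + b = 2 ^ g * v) :
    (∀ m, m < b → collatz A (2 * m + 1) ≠ 1) ∧ collatz A (2 * b + 1) = (S v) ^ 2 ^ g := by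
  have hA' : A = 1 + M ^ a * N ^ b * 1 := by rw [hA, mul_one, N]
  have hA0 : A.eval 0 ≠ 0 := by
    rw [hA']
    have : A.eval 0 = 1 + (M.eval 0) ^ a * (N.eval 0) ^ b * 1 := by rw [hA']; simp
    rw [hA'] at this
    rw [this, M_eval0, N_eval0, zero_pow (by omega)]
    norm_num
  have hA1 : A.eval 1 ≠ 0 := by
    have : A.eval 1 = 1 + (M.eval 1) ^ a * (N.eval 1) ^ b * 1 := by rw [hA']; simp
    rw [this, M_eval1, N_eval1, zero_pow (by omega)]
    norm_num
  have h0 : collatz A (2 * 0 + 1) = 1 + M ^ a * N ^ b * 1 := by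
    have : collatz A 1 = oddPart A := collatz_one A
    have h2 : oddPart A = A := by
      have := oddPart_eq 0 0 A hA0 hA1
      simpa using this
    calc collatz A (2 * 0 + 1) = collatz A 1 := by norm_num
    _ = A := by rw [collatz_one, h2]
    _ = 1 + M ^ a * N ^ b * 1 := hA'
  have hramp0 := ramp A 0 a b 1 (by simp) (by simp) h0
  constructor
  · intro m hm
    have := hramp0 m hm
    rw [zero_add] at this
    rw [this]
    exact state_ne_one one_ne_zero
  · -- jump
    have hlast := hramp0 (b - 1) (by omega)
    rw [zero_add, show b - (b - 1) = 1 by omega, pow_one] at hlast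
    have hfac : 1 + M ^ (a + (b - 1) + 1) * 1 = N ^ (2 ^ g) * (S v) ^ 2 ^ g := by
      calc 1 + M ^ (a + (b - 1) + 1) * 1 = 1 + (M ^ v) ^ 2 ^ g := by
            rw [mul_one, show a + (b - 1) + 1 = 2 ^ g * v by omega, mul_comm (2 ^ g) v, pow_mul]
      _ = (1 + M ^ v) ^ 2 ^ g := by rw [add_pow_char_pow (p := 2), one_pow]
      _ = (N * S v) ^ 2 ^ g := by rw [N_mul_S]
      _ = N ^ 2 ^ g * (S v) ^ 2 ^ g := mul_pow _ _ _
    have := jump A (b - 1) (a + (b - 1)) (2 ^ g) 1 ((S v) ^ 2 ^ g) hlast hfac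
      (by rw [eval_pow, S_eval0 hv, one_pow]; norm_num)
      (by rw [eval_pow, S_eval1 hv, one_pow]; norm_num)
    rw [show b - 1 + 1 = b by omega] at this
    exact this

lemma collatzLength_eq (A : R2) (m₀ : ℕ) (h1 : collatz A (2 * m₀ + 1) = 1)
    (h2 : ∀ m, m < m₀ → collatz A (2 * m + 1) ≠ 1) : collatzLength A = m₀ + 1 := by
  rw [collatzLength]
  congr 1
  apply IsLeast.csInf_eq
  constructor
  · exact h1
  · intro m hm
    by_contra h
    push_neg at h
    exact h2 m h hm

theorem length_one_add_M_pow_mul (a b : ℕ) (ha : 2 ≤ a) (hb : 2 ≤ b)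
    (A : Polynomial (ZMod 2)) (hA : A = 1 + M ^ a * (M + 1) ^ b) :
    (∀ r : ℕ, 1 ≤ r → a + b = 2 ^ r → collatzLength A = b + 1) ∧
    (∀ r u : ℕ, 1 ≤ r → Odd u → 3 ≤ u → a + b = 2 ^ r * u →
      ∀ w : ℕ, IsLeast {s : ℕ | 0 < s ∧ u - 1 < 2 ^ s} w →
        collatzLength A = b + 2 ^ r * (2 ^ w - u) + 1) ∧
    (∀ t : ℕ, 1 ≤ t → a + b = 2 ^ t + 1 → collatzLength A = a + 2 * b - 1) ∧
    (∀ v : ℕ, (¬ ∃ s : ℕ, v = 2 ^ s) → a + b = 2 * v + 1 →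
      ∀ r : ℕ, IsLeast {s : ℕ | 0 < s ∧ 2 * v < 2 ^ s} r →
        collatzLength A = b + 2 ^ r - 2 * v) := by
  refine ⟨?_, ?_, ?_, ?_⟩
  · -- case (i)
    intro r hr hn
    have hph := phaseA a b ha hb A hA r 1 (by norm_num) (by omega)
    have hfin : collatz A (2 * b + 1) = 1 := by
      rw [hph.2]
      simp [S]
    rw [collatzLength_eq A b hfin hph.1]
  · -- case (ii)
    intro r u hr hu hu3 hn w hw
    obtain ⟨⟨hwpos, hwub⟩, hwmin⟩ := hw
    have hwlb : 2 ^ (w - 1) ≤ u - 1 := by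
      by_contra h
      push_neg at h
      have hw1 : w ≠ 1 := by
        intro h1
        rw [h1] at h
        simp at h
        omega
      have : w ≤ w - 1 := hwmin ⟨by omega, h⟩
      omega
    have hph := phaseA a b ha hb A hA r u hu hn
    have hcore := core u hu hu3 w hwlb hwub r A b hph.2
    apply collatzLength_eq A (b + 2 ^ r * (2 ^ w - u)) hcore.2
    intro m hm
    by_cases hmb : m < b
    · exact hph.1 m hmb
    · have := hcore.1 (m - b) (by omega)
      rw [show b + (m - b) = m by omega] at this
      exact this
  · -- case (iii)
    intro t ht hn
    have h2t : (2:ℕ) ^ t = 2 * 2 ^ (t - 1) := by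
      rw [← pow_succ']
      congr 1
      omega
    have hnodd : Odd (a + b) := ⟨2 ^ (t - 1), by omega⟩
    have hph := phaseA a b ha hb A hA 0 (a + b) hnodd (by simp)
    have h2t1 : (2:ℕ) ^ (t + 1) = 2 ^ t * 2 := pow_succ 2 t
    have hcore := core (a + b) hnodd (by omega) (t + 1)
      (by rw [show t + 1 - 1 = t by omega]; omega) (by omega) 0 A b hph.2
    have hne : ∀ m, m < b + 2 ^ 0 * (2 ^ (t + 1) - (a + b)) → collatz A (2 * m + 1) ≠ 1 := by
      intro m hm
      by_cases hmb : m < b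
      · exact hph.1 m hmb
      · have := hcore.1 (m - b) (by omega)
        rw [show b + (m - b) = m by omega] at this
        exact this
    rw [collatzLength_eq A (b + 2 ^ 0 * (2 ^ (t + 1) - (a + b))) hcore.2 hne, pow_zero, one_mul]
    omega
  · -- case (iv)
    intro v hv hn r hr
    obtain ⟨⟨hrpos, hrub⟩, hrmin⟩ := hr
    -- memberships are defeq
    have hnodd : Odd (a + b) := ⟨v, by omega⟩
    have hrlb : 2 ^ (r - 1) ≤ 2 * v := by
      by_contra h
      push_neg at h
      have hr1 : r ≠ 1 := by
        intro h1
        rw [h1] at h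
        simp at h
        omega
      have : r ≤ r - 1 := hrmin ⟨by omega, h⟩
      omega
    have hph := phaseA a b ha hb A hA 0 (a + b) hnodd (by simp)
    have hcore := core (a + b) hnodd (by omega) r (by omega) (by omega) 0 A b hph.2
    have hne : ∀ m, m < b + 2 ^ 0 * (2 ^ r - (a + b)) → collatz A (2 * m + 1) ≠ 1 := by
      intro m hm
      by_cases hmb : m < b
      · exact hph.1 m hmb
      · have := hcore.1 (m - b) (by omega)
        rw [show b + (m - b) = m by omega] at this
        exact this
    rw [collatzLength_eq A (b + 2 ^ 0 * (2 ^ r - (a + b))) hcore.2 hne, pow_zero, one_mul]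
    omega
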